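/- Let G = F₂ × ℤ with F₂ the free group on {a,b}, acting on X = T × ℝ (T the Cayley graph of F₂, unit edge lengths) by the product action, and on Y = T × ℝ by the skewed action where (a,0)∗(t,r) = (a·t, r), (b,0)∗(t,r) = (b·t, r+2), (1,1)∗(t,r) = (t, r+1). With x₀ = y₀ = (1,0), for gᵢ = aⁱbⁱ ∈ F₂ the sequence (gᵢⁿ, 0)·x₀ converges in X ∪ ∂X as n → ∞ to the boundary point [gᵢ^∞, 0], while (gᵢⁿ, 0)∗y₀ converges in Y ∪ ∂Y to the boundary point [gᵢ^∞, π/4] (the point of ∂(T×ℝ) = ∂T ∗ ∂ℝ at angle π/4 toward +∞ in the ℝ-factor). -/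

import Mathlib

open Metric Filter Topology

/-- The free group of rank 2, `F₂ = ⟨a, b⟩`. -/
abbrev F2 := FreeGroup Bool

/-- The generator `a` of `F₂`. -/
def fa : F2 := FreeGroup.of false

/-- The generator `b` of `F₂`. -/
def fb : F2 := FreeGroup.of true

/-- Word length of `w ∈ F₂` w.r.t. `{a, b}` (distance in the unit-edge Cayley graph `T`). -/
def wlen (w : F2) : ℕ := (FreeGroup.toWord w).length

/-- Exponent sum of the generator `b` in `w ∈ F₂`. -/
def bsum (w : F2) : ℤ :=
  Multiplicative.toAdd
    (FreeGroup.lift (fun x : Bool => Multiplicative.ofAdd (if x then (1:ℤ) else 0)) w)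

/-- The product action `(w, k) · (t, r) = (w t, r + k)` of `F₂ × ℤ` on `T × ℝ`. -/
def prodAct {T : Type*} [MulAction F2 T] (p : F2 × ℤ) (z : T × ℝ) : T × ℝ :=
  (p.1 • z.1, z.2 + p.2)

/-- The skewed (Bowers–Ruane) action of `F₂ × ℤ` on `T × ℝ`: `a` acts only on `T`, `b`
acts on `T` and shifts the `ℝ`-coordinate by `2`, and `(1,1)` shifts it by `1`. -/
def skewAct {T : Type*} [MulAction F2 T] (p : F2 × ℤ) (z : T × ℝ) : T × ℝ :=
  (p.1 • z.1, z.2 + p.2 + 2 * bsum p.1)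

/-- The sequence `z` in `T × ℝ` converges in the cone topology of `(T × ℝ) ∪ ∂(T × ℝ)`
to the boundary point `[ζ, θ] ∈ ∂T ∗ ∂ℝ`: the `T`-coordinates converge to `ζ ∈ ∂T`
(given an abstract convergence predicate `TConv` on `T ∪ ∂T`), the distances to the
basepoint go to infinity, and the limiting direction makes angle `θ` with the
`T`-factor, i.e. `height / tree-distance → tan θ`. -/
def ConvToBdry {T BT : Type*} [MetricSpace T] (TConv : (ℕ → T) → BT → Prop) (t₀ : T)
    (z : ℕ → T × ℝ) (ζ : BT) (θ : ℝ) : Prop :=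
  TConv (fun n => (z n).1) ζ ∧
  Tendsto (fun n => dist t₀ (z n).1) atTop atTop ∧
  Tendsto (fun n => (z n).2 / dist t₀ (z n).1) atTop (𝓝 (Real.tan θ))

/-- total exponent sum -/
def esum (w : F2) : ℤ :=
  Multiplicative.toAdd (FreeGroup.lift (fun _ : Bool => Multiplicative.ofAdd (1:ℤ)) w)

lemma esum_mul (x y : F2) : esum (x * y) = esum x + esum y := by
  simp [esum, map_mul]

lemma esum_pow (x : F2) (n : ℕ) : esum (x ^ n) = n * esum x := by
  simp [esum, map_pow, toAdd_pow]

lemma esum_fa : esum fa = 1 := by simp [esum, fa]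
lemma esum_fb : esum fb = 1 := by simp [esum, fb]

lemma abs_esum_le (w : F2) : |esum w| ≤ (wlen w : ℤ) := by
  conv_lhs => rw [← FreeGroup.mk_toWord (x := w)]
  rw [wlen]
  generalize (FreeGroup.toWord w) = L
  induction L with
  | nil => simp [esum, FreeGroup.lift_mk]
  | cons hd tl ih =>
      have : FreeGroup.mk (hd :: tl) = FreeGroup.mk [hd] * FreeGroup.mk tl := by
        rw [FreeGroup.mul_mk]; rfl
      rw [this, esum_mul]
      have h1 : |esum (FreeGroup.mk [hd])| = 1 := by
        rcases hd with ⟨x, b⟩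
        cases b <;> simp [esum, FreeGroup.lift_mk]
      calc |esum (FreeGroup.mk [hd]) + esum (FreeGroup.mk tl)|
          ≤ |esum (FreeGroup.mk [hd])| + |esum (FreeGroup.mk tl)| := abs_add_le _ _
        _ ≤ 1 + tl.length := by rw [h1]; exact add_le_add_right ih 1
        _ = ((hd :: tl).length : ℤ) := by simp [add_comm]

lemma wlen_key (i n : ℕ) : wlen ((fa ^ i * fb ^ i) ^ n) = 2 * i * n := by
  have hup : wlen ((fa ^ i * fb ^ i) ^ n) ≤ 2 * i * n := by
    have h1 : ∀ x : Bool, ∀ m : ℕ, FreeGroup.norm ((FreeGroup.of x) ^ m) ≤ m := by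
      intro x m
      induction m with
      | zero => simp
      | succ k ih =>
          calc FreeGroup.norm ((FreeGroup.of x) ^ (k+1))
              ≤ FreeGroup.norm ((FreeGroup.of x) ^ k) + FreeGroup.norm (FreeGroup.of x) := by
                rw [pow_succ]; exact FreeGroup.norm_mul_le _ _
            _ ≤ k + 1 := by simpa using ih
    have h2 : ∀ m : ℕ, FreeGroup.norm ((fa ^ i * fb ^ i) ^ m) ≤ 2 * i * m := by
      intro m
      induction m with
      | zero => simp
      | succ k ih =>
          calc FreeGroup.norm ((fa ^ i * fb ^ i) ^ (k+1))
              ≤ FreeGroup.norm ((fa ^ i * fb ^ i) ^ k) + FreeGroup.norm (fa ^ i * fb ^ i) := by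
                rw [pow_succ]; exact FreeGroup.norm_mul_le _ _
            _ ≤ 2 * i * k + (i + i) := by
                have := FreeGroup.norm_mul_le (fa ^ i) (fb ^ i)
                have ha := h1 false i
                have hb := h1 true i
                unfold fa fb at this ih ⊢
                omega
            _ = 2 * i * (k + 1) := by ring
    exact h2 n
  have hup2 : wlen ((fa ^ i * fb ^ i) ^ n) ≤ 2 * i * n := hup
  have hlow : (2 * i * n : ℤ) ≤ (wlen ((fa ^ i * fb ^ i) ^ n) : ℤ) := by
    have ht : esum ((fa ^ i * fb ^ i) ^ n) = 2 * i * n := by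
      rw [esum_pow, esum_mul, esum_pow, esum_pow, esum_fa, esum_fb]
      push_cast; ring
    have := abs_esum_le ((fa ^ i * fb ^ i) ^ n)
    rw [ht] at this
    calc (2 * i * n : ℤ) ≤ |(2 * i * n : ℤ)| := le_abs_self _
      _ ≤ _ := this
  exact le_antisymm hup2 (by exact_mod_cast hlow)

lemma bsum_mul (x y : F2) : bsum (x * y) = bsum x + bsum y := by simp [bsum, map_mul]
lemma bsum_pow (x : F2) (n : ℕ) : bsum (x ^ n) = n * bsum x := by
  simp [bsum, map_pow, toAdd_pow]
lemma bsum_fa : bsum fa = 0 := by simp [bsum, fa]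
lemma bsum_fb : bsum fb = 1 := by simp [bsum, fb]

lemma bsum_key (i n : ℕ) : bsum ((fa ^ i * fb ^ i) ^ n) = i * n := by
  rw [bsum_pow, bsum_mul, bsum_pow, bsum_pow, bsum_fa, bsum_fb]; push_cast; ring

lemma dist_key {T : Type*} [MetricSpace T] [MulAction F2 T] (t₀ : T)
    (hdist : ∀ w : F2, dist t₀ (w • t₀) = (wlen w : ℝ)) (i : ℕ) (hi : 1 ≤ i) :
    Tendsto (fun n : ℕ => dist t₀ (((fa ^ i * fb ^ i) ^ n) • t₀)) atTop atTop := by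
  have h : ∀ n : ℕ, dist t₀ (((fa ^ i * fb ^ i) ^ n) • t₀) = ((2 * i * n : ℕ) : ℝ) := by
    intro n; rw [hdist, wlen_key]
  simp only [h]
  apply tendsto_atTop_mono (f := fun n : ℕ => (n : ℝ))
  · intro n
    have : n ≤ 2 * i * n := by nlinarith
    exact_mod_cast this
  · exact tendsto_natCast_atTop_atTop


theorem stmt12 {T BT : Type*} [MetricSpace T] [MulAction F2 T]
    (hiso : ∀ w : F2, Isometry (fun t : T => w • t))
    (t₀ : T)
    -- `T` is the Cayley graph of `F₂` with unit edge lengths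
    (hdist : ∀ w : F2, dist t₀ (w • t₀) = (wlen w : ℝ))
    -- abstract boundary `∂T` of the tree, with convergence predicate `TConv`
    (TConv : (ℕ → T) → BT → Prop)
    -- `ζ i` is the boundary point `gᵢ^∞ ∈ ∂T`, `gᵢ = aⁱbⁱ`
    (ζ : ℕ → BT)
    (hζ : ∀ i : ℕ, 1 ≤ i → TConv (fun n => ((fa ^ i * fb ^ i) ^ n) • t₀) (ζ i)) :
    ∀ i : ℕ, 1 ≤ i →
      -- under the product action, `(gᵢⁿ, 0) · (t₀, 0) → [gᵢ^∞, 0]`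
      ConvToBdry TConv t₀
        (fun n => prodAct (((fa ^ i * fb ^ i) ^ n : F2), (0:ℤ)) (t₀, (0:ℝ)))
        (ζ i) 0 ∧
      -- under the skewed action, `(gᵢⁿ, 0) ∗ (t₀, 0) → [gᵢ^∞, π/4]`
      ConvToBdry TConv t₀
        (fun n => skewAct (((fa ^ i * fb ^ i) ^ n : F2), (0:ℤ)) (t₀, (0:ℝ)))
        (ζ i) (Real.pi / 4) := by
  intro i hi
  have hd := dist_key t₀ hdist i hi
  constructor
  · refine ⟨hζ i hi, hd, ?_⟩
    have : (fun n : ℕ => (prodAct (((fa ^ i * fb ^ i) ^ n : F2), (0:ℤ)) (t₀, (0:ℝ))).2 /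
        dist t₀ (prodAct (((fa ^ i * fb ^ i) ^ n : F2), (0:ℤ)) (t₀, (0:ℝ))).1) = fun _ => 0 := by
      funext n; simp [prodAct]
    rw [this, Real.tan_zero]
    exact tendsto_const_nhds
  · refine ⟨hζ i hi, hd, ?_⟩
    rw [Real.tan_pi_div_four]
    apply Tendsto.congr' (f₁ := fun _ : ℕ => (1:ℝ)) _ tendsto_const_nhds
    filter_upwards [eventually_ge_atTop 1] with n hn
    have h2 : dist t₀ (((fa ^ i * fb ^ i) ^ n) • t₀) = ((2 * i * n : ℕ) : ℝ) := by
      rw [hdist, wlen_key]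
    simp only [skewAct, prodAct, h2, bsum_key]
    have hpos : (0:ℝ) < ((2 * i * n : ℕ) : ℝ) := by
      have : 0 < 2 * i * n := by positivity
      exact_mod_cast this
    rw [eq_comm]
    field_simp
    push_cast
    ring
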